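/- Let $m \geq 3$ be odd and $C$ the rank-$(2m+1)$ $D_m$-lattice with $\widehat{H}^0(D_m, C) \cong \mathbb{Z}/2\mathbb{Z}$ and $C \oplus \mathbb{Z} \cong \mathbb{Z}[D_m/\langle x^2y\rangle] \oplus \mathbb{Z}[D_m/\langle xy\rangle] \oplus \mathbb{Z}[D_m/\langle x\rangle]$. Then $C$ is not a permutation $D_m$-lattice. -/

import Mathlib

/-- For `m ≥ 3` odd, a `D_m`-lattice `M` of `ℤ`-rank `2m+1` with
`Ĥ⁰(D_m, M) ≅ ℤ/2ℤ` and `M ⊕ ℤ ≅ ℤ[D_m/⟨x²y⟩] ⊕ ℤ[D_m/⟨xy⟩] ⊕ ℤ[D_m/⟨x⟩]`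
is not a permutation `D_m`-lattice (it has no `ℤ`-basis permuted by `D_m`). -/
theorem stmt_7 (m : ℕ) [NeZero m] (hm : 3 ≤ m) (hodd : Odd m)
    (M : Type) [AddCommGroup M] [Module ℤ M] [Module.Free ℤ M] [Module.Finite ℤ M]
    (ρ : Representation ℤ (DihedralGroup m) M)
    (hrank : Module.finrank ℤ M = 2 * m + 1)
    (F : Submodule ℤ M)
    (hF : F = ⨅ g : DihedralGroup m, LinearMap.ker (ρ g - LinearMap.id))
    (N : M →ₗ[ℤ] M) (hN : N = ∑ g : DihedralGroup m, ρ g)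
    (htate : letI := F.module;
      Nonempty ((↥F ⧸ Submodule.comap F.subtype (LinearMap.range N)) ≃ₗ[ℤ] ZMod 2))
    (hstab : ∃ e : (M × ℤ) ≃ₗ[ℤ]
      (((DihedralGroup m ⧸
          Subgroup.zpowers (DihedralGroup.r 1 ^ 2 * DihedralGroup.sr 0)) →₀ ℤ) ×
        ((DihedralGroup m ⧸
          Subgroup.zpowers (DihedralGroup.r 1 * DihedralGroup.sr 0)) →₀ ℤ) ×
        ((DihedralGroup m ⧸ Subgroup.zpowers (DihedralGroup.r 1)) →₀ ℤ)),
      ∀ (g : DihedralGroup m) (v : M × ℤ),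
        e (ρ g v.1, v.2) =
          ((Representation.ofMulAction ℤ (DihedralGroup m)
            (DihedralGroup m ⧸
              Subgroup.zpowers (DihedralGroup.r 1 ^ 2 * DihedralGroup.sr 0)) g
              (MonoidAlgebra.ofCoeff (e v).1)).coeff,
           (Representation.ofMulAction ℤ (DihedralGroup m)
            (DihedralGroup m ⧸
              Subgroup.zpowers (DihedralGroup.r 1 * DihedralGroup.sr 0)) g
              (MonoidAlgebra.ofCoeff (e v).2.1)).coeff,
           (Representation.ofMulAction ℤ (DihedralGroup m)
            (DihedralGroup m ⧸ Subgroup.zpowers (DihedralGroup.r 1)) g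
              (MonoidAlgebra.ofCoeff (e v).2.2)).coeff)) :
    ¬ ∃ (ι : Type) (b : Module.Basis ι ℤ M),
        ∀ (g : DihedralGroup m) (i : ι), ∃ j : ι, ρ g (b i) = b j := by
  rintro ⟨ι, b, hperm⟩
  classical
  subst hF
  subst hN
  set G := DihedralGroup m with hG
  haveI : Finite ι := Module.Finite.finite_basis b
  haveI : Fintype ι := Fintype.ofFinite ι
  choose σ hσ using hperm
  have hbinj : Function.Injective b := b.injective
  have hσ_one : ∀ i, σ 1 i = i := by
    intro i; apply hbinj; rw [← hσ, map_one]; rfl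
  have hσ_mul : ∀ g h i, σ (g * h) i = σ g (σ h i) := by
    intro g h i; apply hbinj
    rw [← hσ, ← hσ, ← hσ, map_mul]; rfl
  letI : MulAction G ι :=
    { smul := fun g i => σ g i
      one_smul := hσ_one
      mul_smul := fun g h i => hσ_mul g h i }
  have hsmul : ∀ (g : G) (i : ι), ρ g (b i) = b (g • i) := hσ
  -- coordinates of ρ g x
  have hrepr : ∀ (g : G) (x : M) (j : ι), b.repr (ρ g x) j = b.repr x (g⁻¹ • j) := by
    intro g x j
    have h0 : (Finsupp.lapply j : (ι →₀ ℤ) →ₗ[ℤ] ℤ) ∘ₗ (b.repr.toLinearMap ∘ₗ ρ g)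
        = (Finsupp.lapply (g⁻¹ • j) : (ι →₀ ℤ) →ₗ[ℤ] ℤ) ∘ₗ b.repr.toLinearMap := by
      apply b.ext
      intro i
      simp only [LinearMap.coe_comp, Function.comp_apply, LinearEquiv.coe_coe,
        Finsupp.lapply_apply]
      rw [hsmul, b.repr_self, b.repr_self, Finsupp.single_apply, Finsupp.single_apply]
      congr 1
      simp only [eq_iff_iff]
      constructor
      · rintro rfl; rw [inv_smul_smul]
      · rintro rfl; rw [smul_inv_smul]
    exact LinearMap.congr_fun h0 x
  -- coordinates of the norm
  have hN_repr : ∀ (x : M) (j : ι),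
      b.repr ((∑ g : G, ρ g) x) j = ∑ g : G, b.repr x (g • j) := by
    intro x j
    rw [LinearMap.sum_apply, map_sum, Finsupp.coe_finset_sum, Finset.sum_apply]
    rw [show (∑ g : G, b.repr (ρ g x) j) = ∑ g : G, b.repr x (g⁻¹ • j) from
      Finset.sum_congr rfl fun g _ => hrepr g x j]
    exact Fintype.sum_equiv (Equiv.inv G) _ _ fun g => rfl
  -- the key divisibility
  have key : ∀ j : ι, Fintype.card (MulAction.stabilizer G j) ∣ 2 := by
    intro j
    set n := Fintype.card (MulAction.stabilizer G j) with hn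
    set O : Finset ι := Finset.univ.filter (· ∈ MulAction.orbit G j) with hO
    have hjO : j ∈ O := by
      simp [hO, MulAction.mem_orbit_self]
    set s : M := ∑ i ∈ O, b i with hs
    have hmemO : ∀ (g : G) (i : ι), i ∈ O ↔ g • i ∈ O := by
      intro g i
      simp only [hO, Finset.mem_filter, Finset.mem_univ, true_and]
      constructor
      · rintro ⟨h, rfl⟩
        exact ⟨g * h, mul_smul g h j⟩
      · rintro ⟨h, hh⟩
        refine ⟨g⁻¹ * h, ?_⟩
        show (g⁻¹ * h) • j = i
        have hh' : h • j = g • i := hh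
        rw [mul_smul, hh', inv_smul_smul]
    have hsF : s ∈ ⨅ g : G, LinearMap.ker (ρ g - LinearMap.id) := by
      rw [Submodule.mem_iInf]
      intro g
      rw [LinearMap.mem_ker, LinearMap.sub_apply, LinearMap.id_apply, sub_eq_zero]
      rw [hs, map_sum]
      refine Finset.sum_equiv (MulAction.toPerm g) (fun i => hmemO g i) fun i _ => ?_
      rw [hsmul]; rfl
    -- repr s at j is 1
    have hsrepr : b.repr s j = 1 := by
      rw [hs, map_sum]
      rw [Finsupp.coe_finset_sum, Finset.sum_apply]
      rw [show (∑ i ∈ O, b.repr (b i) j) = ∑ i ∈ O, if i = j then (1:ℤ) else 0 from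
        Finset.sum_congr rfl fun i _ => by rw [b.repr_self, Finsupp.single_apply]]
      rw [Finset.sum_ite_eq' O j fun _ => (1:ℤ)]
      simp [hjO]
    -- use the Tate cohomology hypothesis
    set Fm : Submodule ℤ M := ⨅ g : G, LinearMap.ker (ρ g - LinearMap.id) with hFm
    set Nm : M →ₗ[ℤ] M := ∑ g : G, ρ g with hNm
    letI := Fm.module
    obtain ⟨e⟩ := htate
    have h2q : ∀ q : (↥Fm ⧸ Submodule.comap Fm.subtype (LinearMap.range Nm)),
        q + q = 0 := by
      intro q
      apply e.injective
      rw [map_add, map_zero]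
      have hz : ∀ y : ZMod 2, y + y = 0 := by decide
      exact hz _
    have hmem : s + s ∈ LinearMap.range Nm := by
      have := h2q (Submodule.Quotient.mk (⟨s, hsF⟩ : Fm))
      rw [← Submodule.Quotient.mk_add, Submodule.Quotient.mk_eq_zero] at this
      simpa using this
    obtain ⟨x, hx⟩ := hmem
    -- coefficient of the norm at j is divisible by n
    have hdvd : (n : ℤ) ∣ b.repr (Nm x) j := by
      rw [show b.repr (Nm x) j = ∑ g : G, b.repr x (g • j) from hN_repr x j]
      rw [← Finset.sum_fiberwise Finset.univ (fun g : G => g • j)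
        (fun g : G => b.repr x (g • j))]
      refine Finset.dvd_sum fun i _ => ?_
      have hconst : ∑ g ∈ Finset.univ.filter (fun g : G => g • j = i), b.repr x (g • j)
          = ((Finset.univ.filter (fun g : G => g • j = i)).card : ℤ) * b.repr x i := by
        rw [Finset.sum_congr rfl fun g hg => by
          rw [(Finset.mem_filter.mp hg).2]]
        rw [Finset.sum_const, nsmul_eq_mul]
      rw [hconst]
      rcases Finset.eq_empty_or_nonempty
        (Finset.univ.filter (fun g : G => g • j = i)) with he | ⟨g₀, hg₀⟩
      · rw [he]; simp
      · have hg₀' : g₀ • j = i := (Finset.mem_filter.mp hg₀).2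
        have hcard : (Finset.univ.filter (fun g : G => g • j = i)).card = n := by
          have hstab : n = (Finset.univ.filter (fun g : G => g • j = j)).card := by
            rw [hn, ← Fintype.card_subtype]
            exact Fintype.card_congr
              (Equiv.subtypeEquivRight fun g => MulAction.mem_stabilizer_iff)
          rw [hstab]
          refine Finset.card_nbij' (fun g => g₀⁻¹ * g) (fun g => g₀ * g) ?_ ?_ ?_ ?_
          · intro a ha
            simp only [Finset.coe_filter, Set.mem_setOf_eq, Finset.mem_coe, Finset.mem_filter, Finset.mem_univ, true_and] at ha ⊢
            rw [mul_smul, ha, ← hg₀', inv_smul_smul]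
          · intro a ha
            simp only [Finset.coe_filter, Set.mem_setOf_eq, Finset.mem_coe, Finset.mem_filter, Finset.mem_univ, true_and] at ha ⊢
            rw [mul_smul, ha, hg₀']
          · intro a _; simp
          · intro a _; simp
        rw [hcard]
        exact Dvd.intro _ rfl
    rw [hx] at hdvd
    have : b.repr (s + s) j = 2 := by
      rw [map_add, Finsupp.add_apply, hsrepr]; norm_num
    rw [this] at hdvd
    exact_mod_cast hdvd
  -- orbit sizes are multiples of m
  have horb : ∀ j : ι, m ∣ Fintype.card (MulAction.orbit G j) := by
    intro j
    obtain ⟨k, hk⟩ := key j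
    have h1 := MulAction.card_orbit_mul_card_stabilizer_eq_card_group G j
    have h2 : Fintype.card G = 2 * m := DihedralGroup.card
    rw [h2] at h1
    have hnpos : 0 < Fintype.card (MulAction.stabilizer G j) := Fintype.card_pos
    refine ⟨k, ?_⟩
    have h3 : Fintype.card (MulAction.orbit G j) * Fintype.card (MulAction.stabilizer G j)
        = (m * k) * Fintype.card (MulAction.stabilizer G j) := by
      rw [h1]
      calc 2 * m = m * 2 := by ring
        _ = m * (Fintype.card (MulAction.stabilizer G j) * k) := by rw [← hk]
        _ = (m * k) * Fintype.card (MulAction.stabilizer G j) := by ring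
    exact Nat.eq_of_mul_eq_mul_right hnpos h3
  have hdvd : m ∣ Fintype.card ι := by
    rw [Fintype.card_congr (MulAction.selfEquivSigmaOrbits G ι), Fintype.card_sigma]
    exact Finset.dvd_sum fun ω _ => horb ω.out
  have hcardι : Fintype.card ι = 2 * m + 1 := by
    rw [← hrank]; exact (Module.finrank_eq_card_basis b).symm
  rw [hcardι] at hdvd
  have hone : m ∣ 1 := (Nat.dvd_add_right (dvd_mul_left m 2)).mp hdvd
  exact absurd (Nat.le_of_dvd one_pos hone) (by omega)
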